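/- Let $C_1,\dots,C_P$ be sets in $\mathbb{R}^3$ with pairwise distinct designated points (vertices) $b_1,\dots,b_P$, $b_i\in C_i$, such that for all $i\ne j$ the intersection $C_i\cap C_j$ is a single point equal to either $b_i$ or $b_j$. Then $P\le 3$. -/
import Mathlib


/-- A family of sets with pairwise distinct designated vertices, whose pairwise
intersections are each a single point equal to one of the two vertices involved,
has at most 3 members. -/
theorem stmt_15 (P : ℕ) (C : Fin P → Set (EuclideanSpace ℝ (Fin 3)))
    (b : Fin P → EuclideanSpace ℝ (Fin 3)) (hb : Function.Injective b)
    (hmem : ∀ i, b i ∈ C i)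
    (hinter : ∀ i j, i ≠ j → C i ∩ C j = {b i} ∨ C i ∩ C j = {b j}) :
    P ≤ 3 := by
  by_contra hP
  push_neg at hP
  have h4 : 4 ≤ P := hP
  -- embed Fin 4 into Fin P
  let a : Fin 4 → Fin P := fun k => ⟨k, by omega⟩
  have hane : ∀ p q : Fin 4, p ≠ q → a p ≠ a q := by
    intro p q h hc
    simp only [a, Fin.mk.injEq] at hc
    exact h (Fin.ext hc)
  -- a vertex cannot belong to two other sets
  have key : ∀ i j k : Fin P, i ≠ j → i ≠ k → j ≠ k →
      ¬(b i ∈ C j ∧ b i ∈ C k) := by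
    intro i j k hij hik hjk ⟨h1, h2⟩
    rcases hinter j k hjk with h | h
    · have : b i ∈ ({b j} : Set _) := h ▸ Set.mem_inter h1 h2
      exact hij (hb (Set.mem_singleton_iff.mp this))
    · have : b i ∈ ({b k} : Set _) := h ▸ Set.mem_inter h1 h2
      exact hik (hb (Set.mem_singleton_iff.mp this))
  -- each pair gives an orientation
  have edge : ∀ p q : Fin 4, p ≠ q → b (a p) ∈ C (a q) ∨ b (a q) ∈ C (a p) := by
    intro p q h
    rcases hinter (a p) (a q) (hane p q h) with hpq | hpq
    · left
      have : b (a p) ∈ C (a p) ∩ C (a q) := hpq ▸ rfl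
      exact this.2
    · right
      have : b (a q) ∈ C (a p) ∩ C (a q) := hpq ▸ rfl
      exact this.1
  have e01 := edge 0 1 (by decide)
  have e02 := edge 0 2 (by decide)
  have e03 := edge 0 3 (by decide)
  have e12 := edge 1 2 (by decide)
  have e13 := edge 1 3 (by decide)
  have e23 := edge 2 3 (by decide)
  have n0a := key (a 0) (a 1) (a 2) (hane 0 1 (by decide)) (hane 0 2 (by decide)) (hane 1 2 (by decide))
  have n0b := key (a 0) (a 1) (a 3) (hane 0 1 (by decide)) (hane 0 3 (by decide)) (hane 1 3 (by decide))
  have n0c := key (a 0) (a 2) (a 3) (hane 0 2 (by decide)) (hane 0 3 (by decide)) (hane 2 3 (by decide))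
  have n1a := key (a 1) (a 0) (a 2) (hane 1 0 (by decide)) (hane 1 2 (by decide)) (hane 0 2 (by decide))
  have n1b := key (a 1) (a 0) (a 3) (hane 1 0 (by decide)) (hane 1 3 (by decide)) (hane 0 3 (by decide))
  have n1c := key (a 1) (a 2) (a 3) (hane 1 2 (by decide)) (hane 1 3 (by decide)) (hane 2 3 (by decide))
  have n2a := key (a 2) (a 0) (a 1) (hane 2 0 (by decide)) (hane 2 1 (by decide)) (hane 0 1 (by decide))
  have n2b := key (a 2) (a 0) (a 3) (hane 2 0 (by decide)) (hane 2 3 (by decide)) (hane 0 3 (by decide))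
  have n2c := key (a 2) (a 1) (a 3) (hane 2 1 (by decide)) (hane 2 3 (by decide)) (hane 1 3 (by decide))
  have n3a := key (a 3) (a 0) (a 1) (hane 3 0 (by decide)) (hane 3 1 (by decide)) (hane 0 1 (by decide))
  have n3b := key (a 3) (a 0) (a 2) (hane 3 0 (by decide)) (hane 3 2 (by decide)) (hane 0 2 (by decide))
  have n3c := key (a 3) (a 1) (a 2) (hane 3 1 (by decide)) (hane 3 2 (by decide)) (hane 1 2 (by decide))
  rcases e01 with w01|w10 <;> rcases e02 with w02|w20 <;> rcases e03 with w03|w30 <;>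
    rcases e12 with w12|w21 <;> rcases e13 with w13|w31 <;> rcases e23 with w23|w32 <;>
    first
      | exact n0a ⟨w01, w02⟩ | exact n0b ⟨w01, w03⟩ | exact n0c ⟨w02, w03⟩
      | exact n1a ⟨w10, w12⟩ | exact n1b ⟨w10, w13⟩ | exact n1c ⟨w12, w13⟩
      | exact n2a ⟨w20, w21⟩ | exact n2b ⟨w20, w23⟩ | exact n2c ⟨w21, w23⟩
      | exact n3a ⟨w30, w31⟩ | exact n3b ⟨w30, w32⟩ | exact n3c ⟨w31, w32⟩
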